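/- arXiv:1806.03135 — 4 statements merged into one kernel-verified Lean document; each statement's English description precedes it below -/
import Mathlib

section
/- Let D be a nonnegative integer and let 0 < s < 2 be a real number. Let a be a nonzero finitely supported real sequence whose moments of order up to D vanish, i.e. Σ_j a_j j^k = 0 for every integer 0 ≤ k ≤ D. Then (−1)^D Σ_{k,l} a_k a_l |k−l|^{2D+s} < 0; equivalently, writing (a*a)_m = Σ_{k−l=m} a_k a_l, one has (−1)^D Σ_m (a*a)_m |m|^{2D+s} < 0 (in particular this sum is nonzero). -/
open Finset Real Set MeasureTheory

noncomputable def Tcos (D : ℕ) (u : ℝ) : ℝ := ∑ j ∈ range (D+1), (-1:ℝ)^j * u^(2*j) / (Nat.factorial (2*j))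
noncomputable def Tsin (D : ℕ) (u : ℝ) : ℝ := ∑ j ∈ range (D+1), (-1:ℝ)^j * u^(2*j+1) / (Nat.factorial (2*j+1))
noncomputable def Fc (D : ℕ) (u : ℝ) : ℝ := (-1:ℝ)^(D+1) * (Real.cos u - Tcos D u)
noncomputable def Fs (D : ℕ) (u : ℝ) : ℝ := (-1:ℝ)^(D+1) * (Real.sin u - Tsin D u)
noncomputable def B (n : ℕ) (u : ℝ) : ℝ := u^n / (Nat.factorial n)

lemma Tcos_zero (u : ℝ) : Tcos 0 u = 1 := by simp [Tcos]

lemma Tcos_succ (D : ℕ) (u : ℝ) : Tcos (D+1) u = Tcos D u + (-1:ℝ)^(D+1) * u^(2*(D+1)) / (Nat.factorial (2*(D+1))) := by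
  simp [Tcos, Finset.sum_range_succ]

lemma Tcos_zero_eval (D : ℕ) : Tcos D 0 = 1 := by
  induction D with
  | zero => simp [Tcos]
  | succ n ih => rw [Tcos_succ, ih]; norm_num

lemma Tsin_zero_eval (D : ℕ) : Tsin D 0 = 0 := by
  simp [Tsin]

lemma hasDerivAt_Tsin (D : ℕ) (u : ℝ) : HasDerivAt (Tsin D) (Tcos D u) u := by
  have : ∀ j ∈ range (D+1), HasDerivAt (fun u : ℝ => (-1:ℝ)^j * u^(2*j+1) / (Nat.factorial (2*j+1)))
      ((-1:ℝ)^j * u^(2*j) / (Nat.factorial (2*j))) u := by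
    intro j _
    have h := (hasDerivAt_pow (2*j+1) u).const_mul ((-1:ℝ)^j)
    have h2 := h.div_const ((Nat.factorial (2*j+1)) : ℝ)
    refine h2.congr_deriv ?_
    symm
    have : ((Nat.factorial (2*j+1)) : ℝ) = ((2*j+1):ℝ) * (Nat.factorial (2*j)) := by
      rw [Nat.factorial_succ]; push_cast; ring
    rw [this, Nat.add_sub_cancel]
    field_simp
    push_cast
    ring
  have := HasDerivAt.fun_sum this
  exact this

lemma hasDerivAt_Tcos (D : ℕ) (u : ℝ) : HasDerivAt (Tcos (D+1)) (-Tsin D u) u := by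
  have key : ∀ j ∈ range (D+1), HasDerivAt (fun u : ℝ => (-1:ℝ)^(j+1) * u^(2*(j+1)) / (Nat.factorial (2*(j+1))))
      (-((-1:ℝ)^j * u^(2*j+1) / (Nat.factorial (2*j+1)))) u := by
    intro j _
    have h := ((hasDerivAt_pow (2*(j+1)) u).const_mul ((-1:ℝ)^(j+1))).div_const ((Nat.factorial (2*(j+1))) : ℝ)
    refine h.congr_deriv ?_
    symm
    have h2 : (2*(j+1)) = (2*j+1) + 1 := by ring
    have : ((Nat.factorial (2*(j+1))) : ℝ) = ((2*(j+1)):ℝ) * (Nat.factorial (2*j+1)) := by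
      rw [h2, Nat.factorial_succ]; push_cast; ring_nf
    rw [this, pow_succ]
    have h3 : (2*(j+1)) - 1 = 2*j+1 := by omega
    rw [h3]
    field_simp
    push_cast
    ring
  have hsum := HasDerivAt.fun_sum key
  have : HasDerivAt (fun u : ℝ => ∑ j ∈ range (D+1), (-1:ℝ)^(j+1) * u^(2*(j+1)) / (Nat.factorial (2*(j+1))))
      (-Tsin D u) u := by
    refine hsum.congr_deriv ?_
    symm
    simp [Tsin, Finset.sum_neg_distrib]
  have heq : ∀ u : ℝ, Tcos (D+1) u = 1 + ∑ j ∈ range (D+1), (-1:ℝ)^(j+1) * u^(2*(j+1)) / (Nat.factorial (2*(j+1))) := by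
    intro u
    rw [Tcos, Finset.sum_range_succ']
    simp [add_comm]
  rw [show Tcos (D+1) = fun u => 1 + ∑ j ∈ range (D+1), (-1:ℝ)^(j+1) * u^(2*(j+1)) / (Nat.factorial (2*(j+1))) from funext heq]
  simpa using this.const_add 1

lemma hasDerivAt_Fs (D : ℕ) (u : ℝ) : HasDerivAt (Fs D) (Fc D u) u := by
  have := ((Real.hasDerivAt_sin u).sub (hasDerivAt_Tsin D u)).const_mul ((-1:ℝ)^(D+1))
  exact this

lemma hasDerivAt_Fc (D : ℕ) (u : ℝ) : HasDerivAt (Fc (D+1)) (Fs D u) u := by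
  have := ((Real.hasDerivAt_cos u).sub (hasDerivAt_Tcos D u)).const_mul ((-1:ℝ)^(D+2))
  have heq : Fc (D+1) = fun u => (-1:ℝ)^(D+2) * (Real.cos u - Tcos (D+1) u) := rfl
  rw [heq]
  refine this.congr_deriv ?_
  symm
  rw [Fs]; ring

lemma hasDerivAt_B (n : ℕ) (u : ℝ) : HasDerivAt (B (n+1)) (B n u) u := by
  have := (hasDerivAt_pow (n+1) u).div_const ((Nat.factorial (n+1)) : ℝ)
  refine this.congr_deriv ?_
  symm
  rw [B, Nat.factorial_succ]
  push_cast
  field_simp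
lemma nonneg_and_le_of_deriv {f g f' g' : ℝ → ℝ}
    (hf : ∀ u, HasDerivAt f (f' u) u) (hg : ∀ u, HasDerivAt g (g' u) u)
    (hf0 : f 0 = 0) (hg0 : g 0 = 0)
    (h1 : ∀ u, 0 ≤ u → 0 ≤ f' u) (h2 : ∀ u, 0 ≤ u → f' u ≤ g' u) :
    ∀ u, 0 ≤ u → 0 ≤ f u ∧ f u ≤ g u := by
  have mono : ∀ (h h' : ℝ → ℝ), (∀ u, HasDerivAt h (h' u) u) → (∀ u, 0 ≤ u → 0 ≤ h' u) →
      MonotoneOn h (Ici 0) := by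
    intro h h' hh hpos
    apply monotoneOn_of_deriv_nonneg (convex_Ici 0)
    · exact (fun u _ => (hh u).differentiableAt.continuousAt.continuousWithinAt)
    · exact fun u _ => (hh u).differentiableAt.differentiableWithinAt
    · intro u hu
      rw [interior_Ici] at hu
      rw [(hh u).deriv]
      exact hpos u (le_of_lt hu)
  intro u hu
  constructor
  · have := mono f f' hf h1 (self_mem_Ici) hu hu
    rwa [hf0] at this
  · have := mono (fun x => g x - f x) (fun x => g' x - f' x)
      (fun x => (hg x).sub (hf x)) (fun x hx => sub_nonneg.mpr (h2 x hx))
      (self_mem_Ici) hu hu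
    simp only [hg0, hf0, sub_zero] at this
    linarith

lemma Fc_Fs_bounds (D : ℕ) : ∀ u, 0 ≤ u →
    (0 ≤ Fc D u ∧ Fc D u ≤ B (2*D+2) u) ∧ (0 ≤ Fs D u ∧ Fs D u ≤ B (2*D+3) u) := by
  induction D with
  | zero =>
    have hc : ∀ u : ℝ, 0 ≤ u → 0 ≤ Fc 0 u ∧ Fc 0 u ≤ B 2 u := by
      intro u _
      have h1 : Fc 0 u = 1 - Real.cos u := by rw [Fc, Tcos_zero]; ring
      have h2 : B 2 u = u^2/2 := by norm_num [B]
      rw [h1, h2]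
      constructor
      · linarith [Real.cos_le_one u]
      · linarith [Real.one_sub_sq_div_two_le_cos (x := u)]
    intro u hu
    refine ⟨hc u hu, ?_⟩
    have := nonneg_and_le_of_deriv (f := Fs 0) (g := B 3) (f' := Fc 0) (g' := B 2)
      (hasDerivAt_Fs 0) (fun v => hasDerivAt_B 2 v)
      (by simp [Fs, Tsin_zero_eval]) (by simp [B])
      (fun v hv => (hc v hv).1) (fun v hv => (hc v hv).2) u hu
    exact this
  | succ n ih =>
    have hc : ∀ u : ℝ, 0 ≤ u → 0 ≤ Fc (n+1) u ∧ Fc (n+1) u ≤ B (2*(n+1)+2) u := by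
      have := nonneg_and_le_of_deriv (f := Fc (n+1)) (g := B (2*n+4)) (f' := Fs n) (g' := B (2*n+3))
        (hasDerivAt_Fc n) (fun v => hasDerivAt_B (2*n+3) v)
        (by simp [Fc, Tcos_zero_eval]) (by simp [B])
        (fun v hv => ((ih v hv).2).1) (fun v hv => ((ih v hv).2).2)
      intro u hu
      have h4 : 2*(n+1)+2 = 2*n+4 := by ring
      rw [h4]
      exact this u hu
    intro u hu
    refine ⟨hc u hu, ?_⟩
    have := nonneg_and_le_of_deriv (f := Fs (n+1)) (g := B (2*n+5)) (f' := Fc (n+1)) (g' := B (2*n+4))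
      (hasDerivAt_Fs (n+1)) (fun v => hasDerivAt_B (2*n+4) v)
      (by simp [Fs, Tsin_zero_eval]) (by simp [B])
      (fun v hv => (hc v hv).1)
      (fun v hv => by have := (hc v hv).2; rwa [show 2*(n+1)+2 = 2*n+4 from by ring] at this)
      u hu
    rwa [show 2*(n+1)+3 = 2*n+5 from by ring]

lemma Fc_nonneg (D : ℕ) {u : ℝ} (hu : 0 ≤ u) : 0 ≤ Fc D u := ((Fc_Fs_bounds D u hu).1).1
lemma Fc_le (D : ℕ) {u : ℝ} (hu : 0 ≤ u) : Fc D u ≤ B (2*D+2) u := ((Fc_Fs_bounds D u hu).1).2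

lemma Fc_lower (D : ℕ) {u : ℝ} (hu : 0 ≤ u) : B (2*D+2) u - B (2*D+4) u ≤ Fc D u := by
  have hrec : Fc (D+1) u = B (2*D+2) u - Fc D u := by
    have h0 : Fc (D+1) u = (-1:ℝ)^(D+2) * (Real.cos u - Tcos (D+1) u) := rfl
    rw [h0, Tcos_succ, Fc, B, show ((2*(D+1)) : ℕ) = 2*D+2 from by ring]
    have hp : ((-1:ℝ)^(D+1)) * ((-1:ℝ)^(D+1)) = 1 := by
      rw [← pow_add, ← two_mul, pow_mul]
      norm_num
    have hq : ((-1:ℝ)^(D+2)) = -((-1:ℝ)^(D+1)) := by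
      rw [pow_succ]; ring
    rw [hq]
    linear_combination (u^(2*D+2)/((Nat.factorial (2*D+2)) : ℝ)) * hp
  have h1 : Fc (D+1) u ≤ B (2*(D+1)+2) u := Fc_le (D+1) hu
  have h2 : 2*(D+1)+2 = 2*D+4 := by ring
  rw [h2] at h1
  linarith
lemma Fc_continuous (D : ℕ) : Continuous (Fc D) := by
  unfold Fc Tcos
  fun_prop

lemma Fc_even (D : ℕ) (u : ℝ) : Fc D (-u) = Fc D u := by
  unfold Fc Tcos
  rw [Real.cos_neg]
  congr 2
  apply Finset.sum_congr rfl
  intro j _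
  rw [Even.neg_pow (even_two_mul j)]

lemma Fc_abs_le (D : ℕ) {u : ℝ} (hu : 1 ≤ u) : |Fc D u| ≤ (D+2) * u^(2*D) := by
  have h0 : (0:ℝ) < u := lt_of_lt_of_le one_pos hu
  have h1 : |Fc D u| ≤ |Real.cos u| + |Tcos D u| := by
    rw [Fc, abs_mul, abs_pow, abs_neg, abs_one, one_pow, one_mul]
    exact (abs_sub _ _)
  have h2 : |Tcos D u| ≤ (D+1) * u^(2*D) := by
    calc |Tcos D u| ≤ ∑ j ∈ Finset.range (D+1), |(-1:ℝ)^j * u^(2*j) / (Nat.factorial (2*j))| :=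
          Finset.abs_sum_le_sum_abs _ _
      _ ≤ ∑ j ∈ Finset.range (D+1), u^(2*D) := by
          apply Finset.sum_le_sum
          intro j hj
          rw [abs_div, abs_mul, abs_pow, abs_pow, abs_neg, abs_one, one_pow, one_mul,
            abs_of_pos h0, Nat.abs_cast]
          have hfac : (1:ℝ) ≤ (Nat.factorial (2*j) : ℝ) := by
            exact_mod_cast Nat.one_le_iff_ne_zero.mpr (Nat.factorial_ne_zero _)
          have hpow : u^(2*j) ≤ u^(2*D) := by
            apply pow_le_pow_right₀ hu
            have := Finset.mem_range.mp hj
            omega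
          calc u^(2*j) / (Nat.factorial (2*j) : ℝ) ≤ u^(2*j) / 1 := by
                apply div_le_div_of_nonneg_left (by positivity) one_pos hfac
            _ = u^(2*j) := by ring
            _ ≤ u^(2*D) := hpow
      _ = (D+1) * u^(2*D) := by
          rw [Finset.sum_const, Finset.card_range]
          push_cast; ring
  have h3 : |Real.cos u| ≤ 1 := Real.abs_cos_le_one u
  have h4 : (1:ℝ) ≤ u^(2*D) := one_le_pow₀ hu
  calc |Fc D u| ≤ |Real.cos u| + |Tcos D u| := h1
    _ ≤ 1 + (D+1) * u^(2*D) := add_le_add h3 h2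
    _ ≤ u^(2*D) + (D+1) * u^(2*D) := by linarith
    _ = (D+2) * u^(2*D) := by ring

lemma Fc_pos_of_Ioo (D : ℕ) {u : ℝ} (h0 : 0 < u) (h1 : u ≤ 1) : 0 < Fc D u := by
  have hl := Fc_lower D h0.le
  have key : 0 < B (2*D+2) u - B (2*D+4) u := by
    rw [B, B, sub_pos]
    have hfa : ((Nat.factorial (2*D+2)):ℝ) < ((Nat.factorial (2*D+4)):ℝ) := by
      exact_mod_cast (Nat.factorial_lt (by omega)).mpr (by omega)
    have hfb : (0:ℝ) < (Nat.factorial (2*D+2)) := by positivity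
    have hp : 0 < u^(2*D+2) := pow_pos h0 _
    have h5 : u^(2*D+4) ≤ u^(2*D+2) := pow_le_pow_of_le_one h0.le h1 (by omega)
    calc u^(2*D+4)/((Nat.factorial (2*D+4)):ℝ) ≤ u^(2*D+2)/((Nat.factorial (2*D+4)):ℝ) := by gcongr
      _ < u^(2*D+2)/((Nat.factorial (2*D+2)):ℝ) := div_lt_div_of_pos_left hp hfb hfa
  linarith
section Analysis

variable {D : ℕ} {s : ℝ}

lemma g_contOn (D : ℕ) (α : ℝ) : ContinuousOn (fun u : ℝ => Fc D u * u ^ (-1-α)) (Ioi 0) := by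
  apply ContinuousOn.mul (Fc_continuous D).continuousOn
  intro u hu
  exact ((Real.continuousAt_rpow_const u (-1-α) (Or.inl (ne_of_gt hu)))).continuousWithinAt

lemma integ_g (hs0 : 0 < s) (hs2 : s < 2) :
    IntegrableOn (fun u : ℝ => Fc D u * u ^ (-1-(2*(D:ℝ)+s))) (Ioi 0) := by
  set α := 2*(D:ℝ)+s with hα
  have halpha : (0:ℝ) < α := by positivity
  have hIoi : Set.Ioc (0:ℝ) 1 ∪ Set.Ioi 1 = Set.Ioi 0 := Set.Ioc_union_Ioi_eq_Ioi zero_le_one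
  rw [← hIoi]
  apply MeasureTheory.IntegrableOn.union
  · -- on Ioc 0 1
    have hgint : IntegrableOn (fun u : ℝ => (1/((Nat.factorial (2*D+2)):ℝ)) * u ^ (1-s)) (Ioc 0 1) := by
      have h := intervalIntegral.intervalIntegrable_rpow' (a := 0) (b := 1) (r := 1-s) (by linarith)
      rw [intervalIntegrable_iff_integrableOn_Ioc_of_le zero_le_one] at h
      exact h.const_mul _
    apply MeasureTheory.Integrable.mono' hgint
    · exact ((g_contOn D α).mono Set.Ioc_subset_Ioi_self).aestronglyMeasurable measurableSet_Ioc
    · rw [MeasureTheory.ae_restrict_iff' measurableSet_Ioc]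
      apply MeasureTheory.ae_of_all
      intro u hu
      obtain ⟨hu0, hu1⟩ := hu
      have hFc : |Fc D u| ≤ u^(2*D+2)/((Nat.factorial (2*D+2)):ℝ) := by
        rw [abs_of_nonneg (Fc_nonneg D hu0.le)]
        have := Fc_le D hu0.le
        rwa [B] at this
      rw [norm_mul, Real.norm_eq_abs, Real.norm_eq_abs,
        abs_of_nonneg (Real.rpow_nonneg hu0.le _)]
      calc |Fc D u| * u^(-1-α) ≤ (u^(2*D+2)/((Nat.factorial (2*D+2)):ℝ)) * u^(-1-α) := by
            apply mul_le_mul_of_nonneg_right hFc (Real.rpow_nonneg hu0.le _)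
        _ = (1/((Nat.factorial (2*D+2)):ℝ)) * u ^ (1-s) := by
            rw [← Real.rpow_natCast u (2*D+2), div_mul_eq_mul_div, ← Real.rpow_add hu0]
            have : ((2*D+2 : ℕ):ℝ) + (-1-α) = 1-s := by push_cast [hα]; ring
            rw [this]; ring
  · -- on Ioi 1
    have hgint : IntegrableOn (fun u : ℝ => ((D:ℝ)+2) * u ^ (-1-s)) (Ioi 1) := by
      exact (integrableOn_Ioi_rpow_of_lt (by linarith) one_pos).const_mul _
    apply MeasureTheory.Integrable.mono' hgint
    · exact ((g_contOn D α).mono (fun u (hu : u ∈ Ioi (1:ℝ)) => (lt_trans one_pos hu : (0:ℝ) < u))).aestronglyMeasurable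
        measurableSet_Ioi
    · rw [MeasureTheory.ae_restrict_iff' measurableSet_Ioi]
      apply MeasureTheory.ae_of_all
      intro u hu
      have hu1 : (1:ℝ) ≤ u := le_of_lt hu
      have hu0 : (0:ℝ) < u := lt_of_lt_of_le one_pos hu1
      rw [norm_mul, Real.norm_eq_abs, Real.norm_eq_abs,
        abs_of_nonneg (Real.rpow_nonneg hu0.le _)]
      calc |Fc D u| * u^(-1-α) ≤ (((D:ℝ)+2) * u^(2*D)) * u^(-1-α) := by
            apply mul_le_mul_of_nonneg_right (Fc_abs_le D hu1) (Real.rpow_nonneg hu0.le _)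
        _ = ((D:ℝ)+2) * u ^ (-1-s) := by
            rw [mul_assoc, ← Real.rpow_natCast u (2*D), ← Real.rpow_add hu0]
            have : ((2*D : ℕ):ℝ) + (-1-α) = -1-s := by push_cast [hα]; ring
            rw [this]

noncomputable def cD (D : ℕ) (s : ℝ) : ℝ := ∫ u in Ioi (0:ℝ), Fc D u * u ^ (-1-(2*(D:ℝ)+s))

lemma g_nonneg (D : ℕ) (α : ℝ) {u : ℝ} (hu : u ∈ Ioi (0:ℝ)) : 0 ≤ Fc D u * u ^ (-1-α) :=
  mul_nonneg (Fc_nonneg D (le_of_lt hu)) (Real.rpow_nonneg (le_of_lt hu) _)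

lemma cD_pos (hs0 : 0 < s) (hs2 : s < 2) : 0 < cD D s := by
  set α := 2*(D:ℝ)+s with hα
  set f : ℝ → ℝ := fun u => Fc D u * u ^ (-1-α) with hf
  have hint : IntegrableOn f (Ioi 0) := integ_g hs0 hs2
  have hsub : Ioc (2⁻¹:ℝ) 1 ⊆ Ioi (0:ℝ) := fun u hu => lt_trans (by norm_num) hu.1
  have hII : IntervalIntegrable f volume 2⁻¹ 1 := by
    rw [intervalIntegrable_iff_integrableOn_Ioc_of_le (by norm_num)]
    exact hint.mono_set hsub
  have hpos : 0 < ∫ u in (2⁻¹:ℝ)..1, f u := by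
    apply intervalIntegral.intervalIntegral_pos_of_pos_on hII _ (by norm_num)
    intro u hu
    exact mul_pos (Fc_pos_of_Ioo D (lt_trans (by norm_num) hu.1) hu.2.le)
      (Real.rpow_pos_of_pos (lt_trans (by norm_num) hu.1) _)
  have h2 : ∫ u in (2⁻¹:ℝ)..1, f u = ∫ u in Ioc (2⁻¹:ℝ) 1, f u :=
    intervalIntegral.integral_of_le (by norm_num)
  have h3 : ∫ u in Ioc (2⁻¹:ℝ) 1, f u ≤ ∫ u in Ioi (0:ℝ), f u := by
    apply MeasureTheory.setIntegral_mono_set hint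
    · exact MeasureTheory.ae_restrict_of_forall_mem measurableSet_Ioi
        (fun u hu => g_nonneg D α hu)
    · exact MeasureTheory.ae_of_all _ hsub
  have : cD D s = ∫ u in Ioi (0:ℝ), f u := rfl
  rw [this]
  calc (0:ℝ) < ∫ u in (2⁻¹:ℝ)..1, f u := hpos
    _ = ∫ u in Ioc (2⁻¹:ℝ) 1, f u := h2
    _ ≤ ∫ u in Ioi (0:ℝ), f u := h3

lemma Fc_zero_eval (D : ℕ) : Fc D 0 = 0 := by
  rw [Fc, Tcos_zero_eval, Real.cos_zero, sub_self, mul_zero]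

lemma Fc_abs_arg (D : ℕ) (x t : ℝ) : Fc D (x*t) = Fc D (|x| * t) := by
  rcases abs_cases x with ⟨h, _⟩ | ⟨h, _⟩
  · rw [h]
  · rw [h, neg_mul, Fc_even]

lemma integ_scaled (hs0 : 0 < s) (hs2 : s < 2) (x : ℝ) :
    IntegrableOn (fun t : ℝ => Fc D (x*t) * t ^ (-1-(2*(D:ℝ)+s))) (Ioi 0) ∧
    ∫ t in Ioi (0:ℝ), Fc D (x*t) * t ^ (-1-(2*(D:ℝ)+s)) = |x| ^ (2*(D:ℝ)+s) * cD D s := by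
  set α := 2*(D:ℝ)+s with hα
  have halpha : (0:ℝ) < α := by positivity
  rcases eq_or_ne x 0 with rfl | hx
  · constructor
    · apply (integrableOn_congr_fun _ measurableSet_Ioi).mpr
        (integrableOn_zero (s := Ioi (0:ℝ)))
      intro t ht
      simp [Fc_zero_eval]
    · rw [MeasureTheory.setIntegral_congr_fun measurableSet_Ioi
        (g := fun _ : ℝ => (0:ℝ)) (by intro t ht; simp [Fc_zero_eval])]
      simp [Real.zero_rpow (ne_of_gt halpha)]
  · have hb : 0 < |x| := abs_pos.mpr hx
    set b := |x| with hbdef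
    set g : ℝ → ℝ := fun u => Fc D u * u ^ (-1-α) with hg
    have hgint : IntegrableOn g (Ioi 0) := integ_g hs0 hs2
    have hcomp : IntegrableOn (fun t => g (b*t)) (Ioi 0) := by
      have := (integrableOn_Ioi_comp_mul_left_iff g 0 hb).mpr
      rw [mul_zero] at this
      exact this hgint
    have heq : ∀ t ∈ Ioi (0:ℝ), Fc D (x*t) * t ^ (-1-α) = b^(1+α) * g (b*t) := by
      intro t ht
      have ht0 : (0:ℝ) < t := ht
      have hbt : (b*t) ^ (-1-α) = b ^ (-1-α) * t ^ (-1-α) := Real.mul_rpow hb.le ht0.le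
      have hbb : b^(1+α) * b^(-1-α) = 1 := by
        rw [← Real.rpow_add hb]
        norm_num
      have hgval : g (b*t) = Fc D (b*t) * (b ^ (-1-α) * t ^ (-1-α)) := by
        rw [hg]; simp only []; rw [hbt]
      rw [hgval, Fc_abs_arg D x t, ← hbdef]
      calc Fc D (b*t) * t ^ (-1-α) = (b^(1+α) * b^(-1-α)) * (Fc D (b*t) * t ^ (-1-α)) := by
            rw [hbb]; ring
        _ = b ^ (1 + α) * (Fc D (b * t) * (b ^ (-1 - α) * t ^ (-1 - α))) := by ring
    constructor
    · apply (integrableOn_congr_fun heq measurableSet_Ioi).mpr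
      exact (hcomp.const_mul _)
    · rw [MeasureTheory.setIntegral_congr_fun measurableSet_Ioi heq]
      rw [MeasureTheory.integral_const_mul]
      have hsub := MeasureTheory.integral_comp_mul_left_Ioi g 0 hb
      rw [mul_zero] at hsub
      rw [hsub]
      have : cD D s = ∫ u in Ioi (0:ℝ), g u := rfl
      rw [smul_eq_mul, ← this]
      rw [show (1:ℝ)+α = α+1 from by ring, Real.rpow_add hb, Real.rpow_one]
      field_simp

end Analysis
section Algebra

lemma cos_double_sum (A : Finset ℤ) (a : ℤ → ℝ) (t : ℝ) :
    ∑ k ∈ A, ∑ l ∈ A, a k * a l * Real.cos (((k:ℝ) - (l:ℝ)) * t)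
      = (∑ k ∈ A, a k * Real.cos ((k:ℝ)*t))^2 + (∑ k ∈ A, a k * Real.sin ((k:ℝ)*t))^2 := by
  have key : ∀ k l : ℤ, a k * a l * Real.cos (((k:ℝ) - (l:ℝ)) * t)
      = (a k * Real.cos ((k:ℝ)*t)) * (a l * Real.cos ((l:ℝ)*t))
        + (a k * Real.sin ((k:ℝ)*t)) * (a l * Real.sin ((l:ℝ)*t)) := by
    intro k l
    rw [sub_mul, Real.cos_sub]
    ring
  calc ∑ k ∈ A, ∑ l ∈ A, a k * a l * Real.cos (((k:ℝ) - (l:ℝ)) * t)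
      = ∑ k ∈ A, ∑ l ∈ A, ((a k * Real.cos ((k:ℝ)*t)) * (a l * Real.cos ((l:ℝ)*t))
        + (a k * Real.sin ((k:ℝ)*t)) * (a l * Real.sin ((l:ℝ)*t))) := by
        apply Finset.sum_congr rfl; intro k _
        apply Finset.sum_congr rfl; intro l _
        exact key k l
    _ = (∑ k ∈ A, ∑ l ∈ A, (a k * Real.cos ((k:ℝ)*t)) * (a l * Real.cos ((l:ℝ)*t)))
        + (∑ k ∈ A, ∑ l ∈ A, (a k * Real.sin ((k:ℝ)*t)) * (a l * Real.sin ((l:ℝ)*t))) := by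
        rw [← Finset.sum_add_distrib]
        apply Finset.sum_congr rfl; intro k _
        rw [← Finset.sum_add_distrib]
    _ = (∑ k ∈ A, a k * Real.cos ((k:ℝ)*t))^2 + (∑ k ∈ A, a k * Real.sin ((k:ℝ)*t))^2 := by
        rw [sq, sq, Finset.sum_mul_sum, Finset.sum_mul_sum]

lemma moment_double_sum (A : Finset ℤ) (a : ℤ → ℝ) (D : ℕ)
    (hA : ∀ k : ℕ, k ≤ D → ∑ j ∈ A, a j * (j:ℝ)^k = 0) {j : ℕ} (hj : j ≤ D) :
    ∑ k ∈ A, ∑ l ∈ A, a k * a l * ((k:ℝ) - (l:ℝ))^(2*j) = 0 := by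
  have expand : ∀ k l : ℤ, a k * a l * ((k:ℝ) - (l:ℝ))^(2*j)
      = ∑ i ∈ Finset.range (2*j+1),
        (a k * (k:ℝ)^i) * (a l * (l:ℝ)^(2*j-i)) * ((-1:ℝ)^(2*j-i) * (Nat.choose (2*j) i)) := by
    intro k l
    rw [sub_eq_add_neg, add_pow, Finset.mul_sum]
    apply Finset.sum_congr rfl; intro i _
    rw [neg_pow (l:ℝ) (2*j-i)]
    ring
  have pull : ∀ (X Y : ℤ → ℝ) (c : ℝ), ∑ k ∈ A, ∑ l ∈ A, X k * Y l * c
      = ((∑ k ∈ A, X k) * (∑ l ∈ A, Y l)) * c := by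
    intro X Y c
    rw [Finset.sum_mul_sum, Finset.sum_mul]
    apply Finset.sum_congr rfl; intro k _
    rw [Finset.sum_mul]
  calc ∑ k ∈ A, ∑ l ∈ A, a k * a l * ((k:ℝ) - (l:ℝ))^(2*j)
      = ∑ k ∈ A, ∑ l ∈ A, ∑ i ∈ Finset.range (2*j+1),
          (a k * (k:ℝ)^i) * (a l * (l:ℝ)^(2*j-i)) * ((-1:ℝ)^(2*j-i) * (Nat.choose (2*j) i)) := by
        apply Finset.sum_congr rfl; intro k _
        apply Finset.sum_congr rfl; intro l _
        exact expand k l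
    _ = ∑ k ∈ A, ∑ i ∈ Finset.range (2*j+1), ∑ l ∈ A,
          (a k * (k:ℝ)^i) * (a l * (l:ℝ)^(2*j-i)) * ((-1:ℝ)^(2*j-i) * (Nat.choose (2*j) i)) :=
        Finset.sum_congr rfl (fun k _ => Finset.sum_comm)
    _ = ∑ i ∈ Finset.range (2*j+1), ∑ k ∈ A, ∑ l ∈ A,
          (a k * (k:ℝ)^i) * (a l * (l:ℝ)^(2*j-i)) * ((-1:ℝ)^(2*j-i) * (Nat.choose (2*j) i)) :=
        Finset.sum_comm
    _ = 0 := by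
        apply Finset.sum_eq_zero
        intro i hi
        rw [pull (fun k => a k * (k:ℝ)^i) (fun l => a l * (l:ℝ)^(2*j-i))]
        rcases le_or_gt i D with hiD | hiD
        · rw [hA i hiD]
          ring
        · have h2 : 2*j - i ≤ D := by omega
          rw [hA (2*j-i) h2]
          ring

end Algebra
lemma G_eq (D : ℕ) (A : Finset ℤ) (a : ℤ → ℝ)
    (hA : ∀ k : ℕ, k ≤ D → ∑ j ∈ A, a j * (j:ℝ)^k = 0) (t : ℝ) :
    ∑ k ∈ A, ∑ l ∈ A, a k * a l * Fc D (((k:ℝ) - (l:ℝ)) * t)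
      = (-1:ℝ)^(D+1) * ((∑ k ∈ A, a k * Real.cos ((k:ℝ)*t))^2
          + (∑ k ∈ A, a k * Real.sin ((k:ℝ)*t))^2) := by
  have pullc : ∀ (g : ℤ → ℤ → ℝ) (c : ℝ),
      ∑ k ∈ A, ∑ l ∈ A, c * g k l = c * ∑ k ∈ A, ∑ l ∈ A, g k l := by
    intro g c
    rw [Finset.mul_sum]
    exact Finset.sum_congr rfl (fun k _ => by rw [Finset.mul_sum])
  have hT : ∑ k ∈ A, ∑ l ∈ A, a k * a l * Tcos D (((k:ℝ)-(l:ℝ))*t) = 0 := by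
    have expand : ∀ k l : ℤ, a k * a l * Tcos D (((k:ℝ)-(l:ℝ))*t)
        = ∑ j ∈ Finset.range (D+1),
          (a k * a l * ((k:ℝ)-(l:ℝ))^(2*j)) * ((-1:ℝ)^j * t^(2*j) / (Nat.factorial (2*j))) := by
      intro k l
      rw [Tcos, Finset.mul_sum]
      apply Finset.sum_congr rfl; intro j _
      rw [mul_pow]
      ring
    calc ∑ k ∈ A, ∑ l ∈ A, a k * a l * Tcos D (((k:ℝ)-(l:ℝ))*t)
        = ∑ k ∈ A, ∑ l ∈ A, ∑ j ∈ Finset.range (D+1),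
            (a k * a l * ((k:ℝ)-(l:ℝ))^(2*j)) * ((-1:ℝ)^j * t^(2*j) / (Nat.factorial (2*j))) :=
          Finset.sum_congr rfl (fun k _ => Finset.sum_congr rfl (fun l _ => expand k l))
      _ = ∑ k ∈ A, ∑ j ∈ Finset.range (D+1), ∑ l ∈ A,
            (a k * a l * ((k:ℝ)-(l:ℝ))^(2*j)) * ((-1:ℝ)^j * t^(2*j) / (Nat.factorial (2*j))) :=
          Finset.sum_congr rfl (fun k _ => Finset.sum_comm)
      _ = ∑ j ∈ Finset.range (D+1), ∑ k ∈ A, ∑ l ∈ A,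
            (a k * a l * ((k:ℝ)-(l:ℝ))^(2*j)) * ((-1:ℝ)^j * t^(2*j) / (Nat.factorial (2*j))) :=
          Finset.sum_comm
      _ = 0 := by
          apply Finset.sum_eq_zero
          intro j hj
          have hstep : ∑ k ∈ A, ∑ l ∈ A,
              (a k * a l * ((k:ℝ)-(l:ℝ))^(2*j)) * ((-1:ℝ)^j * t^(2*j) / (Nat.factorial (2*j)))
              = (∑ k ∈ A, ∑ l ∈ A, a k * a l * ((k:ℝ)-(l:ℝ))^(2*j))
                  * ((-1:ℝ)^j * t^(2*j) / (Nat.factorial (2*j))) := by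
            rw [Finset.sum_mul]
            exact Finset.sum_congr rfl (fun k _ => by rw [Finset.sum_mul])
          rw [hstep, moment_double_sum A a D hA (Nat.lt_succ_iff.mp (Finset.mem_range.mp hj)),
            zero_mul]
  have main : ∀ k l : ℤ, a k * a l * Fc D (((k:ℝ)-(l:ℝ))*t)
      = (-1:ℝ)^(D+1) * (a k * a l * Real.cos (((k:ℝ)-(l:ℝ))*t))
        - (-1:ℝ)^(D+1) * (a k * a l * Tcos D (((k:ℝ)-(l:ℝ))*t)) := by
    intro k l
    rw [Fc]
    ring
  calc ∑ k ∈ A, ∑ l ∈ A, a k * a l * Fc D (((k:ℝ) - (l:ℝ)) * t)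
      = ∑ k ∈ A, ∑ l ∈ A, ((-1:ℝ)^(D+1) * (a k * a l * Real.cos (((k:ℝ)-(l:ℝ))*t))
          - (-1:ℝ)^(D+1) * (a k * a l * Tcos D (((k:ℝ)-(l:ℝ))*t))) :=
        Finset.sum_congr rfl (fun k _ => Finset.sum_congr rfl (fun l _ => main k l))
    _ = (∑ k ∈ A, ∑ l ∈ A, (-1:ℝ)^(D+1) * (a k * a l * Real.cos (((k:ℝ)-(l:ℝ))*t)))
        - (∑ k ∈ A, ∑ l ∈ A, (-1:ℝ)^(D+1) * (a k * a l * Tcos D (((k:ℝ)-(l:ℝ))*t))) := by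
        rw [← Finset.sum_sub_distrib]
        exact Finset.sum_congr rfl (fun k _ => by rw [← Finset.sum_sub_distrib])
    _ = (-1:ℝ)^(D+1) * ((∑ k ∈ A, a k * Real.cos ((k:ℝ)*t))^2
          + (∑ k ∈ A, a k * Real.sin ((k:ℝ)*t))^2) := by
        rw [pullc, pullc, hT, cos_double_sum A a t]
        ring

open Real in
lemma exists_pos_point (A : Finset ℤ) (a : ℤ → ℝ) (hne : ∃ k ∈ A, a k ≠ 0) :
    ∃ t : ℝ, 0 < t ∧ 0 < (∑ k ∈ A, a k * Real.cos ((k:ℝ)*t))^2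
        + (∑ k ∈ A, a k * Real.sin ((k:ℝ)*t))^2 := by
  by_contra hcon
  push_neg at hcon
  have hq0 : ∀ t : ℝ, 0 < t → (∑ k ∈ A, a k * Real.cos ((k:ℝ)*t))^2
      + (∑ k ∈ A, a k * Real.sin ((k:ℝ)*t))^2 = 0 :=
    fun t ht => le_antisymm (hcon t ht) (by positivity)
  have h2pi : (0:ℝ) < 2*π := by positivity
  have hzero : ∫ t in (0:ℝ)..(2*π), ((∑ k ∈ A, a k * Real.cos ((k:ℝ)*t))^2
      + (∑ k ∈ A, a k * Real.sin ((k:ℝ)*t))^2) = 0 := by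
    rw [intervalIntegral.integral_of_le h2pi.le,
      MeasureTheory.setIntegral_congr_fun measurableSet_Ioc
        (g := fun _ : ℝ => (0:ℝ)) (fun t ht => hq0 t ht.1)]
    simp
  have hI : ∀ p : ℤ×ℤ, ∫ t in (0:ℝ)..(2*π), a p.1 * a p.2 * Real.cos (((p.1:ℝ)-(p.2:ℝ))*t)
      = if p.1 = p.2 then a p.1 * a p.2 * (2*π) else 0 := by
    intro p
    rw [intervalIntegral.integral_const_mul]
    rcases eq_or_ne p.1 p.2 with heq | hne2
    · rw [if_pos heq, heq]
      simp
    · rw [if_neg hne2]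
      have hm : ((p.1:ℝ) - (p.2:ℝ)) ≠ 0 := by
        intro h
        apply hne2
        exact_mod_cast sub_eq_zero.mp h
      rw [intervalIntegral.integral_comp_mul_left Real.cos hm]
      have hsin : Real.sin (((p.1:ℝ)-(p.2:ℝ)) * (2*π)) = 0 := by
        have : ((p.1:ℝ)-(p.2:ℝ)) * (2*π) = ((2*(p.1 - p.2) : ℤ):ℝ) * π := by
          push_cast; ring
        rw [this]
        exact Real.sin_int_mul_pi _
      rw [integral_cos, mul_zero, hsin, Real.sin_zero, sub_zero, smul_eq_mul, mul_zero, mul_zero]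
  have hsum : ∫ t in (0:ℝ)..(2*π), ((∑ k ∈ A, a k * Real.cos ((k:ℝ)*t))^2
      + (∑ k ∈ A, a k * Real.sin ((k:ℝ)*t))^2)
      = ∑ p ∈ A ×ˢ A, (if p.1 = p.2 then a p.1 * a p.2 * (2*π) else 0) := by
    have hfun : ∀ t : ℝ, (∑ k ∈ A, a k * Real.cos ((k:ℝ)*t))^2
        + (∑ k ∈ A, a k * Real.sin ((k:ℝ)*t))^2
        = ∑ p ∈ A ×ˢ A, a p.1 * a p.2 * Real.cos (((p.1:ℝ)-(p.2:ℝ))*t) := by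
      intro t
      rw [← cos_double_sum A a t, Finset.sum_product]
    rw [intervalIntegral.integral_congr (g := fun t => ∑ p ∈ A ×ˢ A,
        a p.1 * a p.2 * Real.cos (((p.1:ℝ)-(p.2:ℝ))*t)) (fun t _ => hfun t)]
    rw [intervalIntegral.integral_finset_sum]
    · exact Finset.sum_congr rfl (fun p _ => hI p)
    · intro p _
      apply Continuous.intervalIntegrable
      fun_prop
  have hdiag : ∑ p ∈ A ×ˢ A, (if p.1 = p.2 then a p.1 * a p.2 * (2*π) else 0)
      = ∑ k ∈ A, (a k)^2 * (2*π) := by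
    rw [Finset.sum_product]
    apply Finset.sum_congr rfl
    intro k hk
    rw [Finset.sum_eq_single k]
    · simp [sq]
    · intro l _ hlk
      simp only []
      rw [if_neg (fun h => hlk (h.symm))]
    · intro hk'
      exact absurd hk hk'
  have hfinal : ∑ k ∈ A, (a k)^2 * (2*π) = 0 := by
    rw [← hdiag, ← hsum, hzero]
  obtain ⟨k0, hk0A, hk0⟩ := hne
  have : (a k0)^2 * (2*π) = 0 := by
    have hnn : ∀ k ∈ A, 0 ≤ (a k)^2 * (2*π) := fun k _ => by positivity
    exact (Finset.sum_eq_zero_iff_of_nonneg hnn).mp hfinal k0 hk0A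
  have : (a k0)^2 = 0 := by
    have := h2pi
    nlinarith [sq_nonneg (a k0)]
  exact hk0 (pow_eq_zero_iff (n := 2) (by norm_num) |>.mp this)
lemma core (D : ℕ) {s : ℝ} (hs0 : 0 < s) (hs2 : s < 2) (A : Finset ℤ) (a : ℤ → ℝ)
    (hA : ∀ k : ℕ, k ≤ D → ∑ j ∈ A, a j * (j:ℝ)^k = 0)
    (hne : ∃ k ∈ A, a k ≠ 0) :
    (-1:ℝ)^D * ∑ k ∈ A, ∑ l ∈ A, a k * a l * |(k:ℝ) - (l:ℝ)| ^ (2*(D:ℝ)+s) < 0 := by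
  set α := 2*(D:ℝ)+s with hα
  have hcpos : 0 < cD D s := cD_pos (D := D) hs0 hs2
  set c := cD D s with hc
  set q : ℝ → ℝ := fun t => (∑ k ∈ A, a k * Real.cos ((k:ℝ)*t))^2
      + (∑ k ∈ A, a k * Real.sin ((k:ℝ)*t))^2 with hqdef
  set F : ℤ×ℤ → ℝ → ℝ :=
    fun p t => (a p.1 * a p.2) * (Fc D (((p.1:ℝ)-(p.2:ℝ))*t) * t ^ (-1-α)) with hF
  have hFint : ∀ p ∈ A ×ˢ A, MeasureTheory.Integrable (F p) (volume.restrict (Set.Ioi 0)) := by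
    intro p _
    exact ((integ_scaled hs0 hs2 ((p.1:ℝ)-(p.2:ℝ))).1).const_mul _
  have hpoint : ∀ t : ℝ, ∑ p ∈ A ×ˢ A, F p t = (-1:ℝ)^(D+1) * (q t * t ^ (-1-α)) := by
    intro t
    have h1 : ∑ p ∈ A ×ˢ A, F p t
        = (∑ k ∈ A, ∑ l ∈ A, a k * a l * Fc D (((k:ℝ)-(l:ℝ))*t)) * t ^ (-1-α) := by
      rw [Finset.sum_product, Finset.sum_mul]
      apply Finset.sum_congr rfl; intro k _
      rw [Finset.sum_mul]
      apply Finset.sum_congr rfl; intro l _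
      rw [hF]
      ring
    rw [h1, G_eq D A a hA t]
    ring
  set S := ∑ k ∈ A, ∑ l ∈ A, a k * a l * |(k:ℝ) - (l:ℝ)| ^ α with hS
  set J := ∫ t in Set.Ioi (0:ℝ), q t * t ^ (-1-α) with hJ
  have hqint : IntegrableOn (fun t => q t * t ^ (-1-α)) (Set.Ioi 0) := by
    have heq : (fun t : ℝ => q t * t ^ (-1-α))
        = fun t => (-1:ℝ)^(D+1) * ((-1:ℝ)^(D+1) * (q t * t ^ (-1-α))) := by
      funext t
      rw [← mul_assoc, ← pow_add, show (D+1)+(D+1) = 2*(D+1) from by ring, pow_mul]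
      norm_num
    rw [heq]
    have : IntegrableOn (fun t => ∑ p ∈ A ×ˢ A, F p t) (Set.Ioi 0) :=
      MeasureTheory.integrable_finset_sum _ hFint
    have h2 : IntegrableOn (fun t => (-1:ℝ)^(D+1) * ∑ p ∈ A ×ˢ A, F p t) (Set.Ioi 0) :=
      this.const_mul _
    apply h2.congr_fun _ measurableSet_Ioi
    intro t _
    simp only []
    rw [hpoint t]
  have hSc : S * c = (-1:ℝ)^(D+1) * J := by
    have h1 : ∀ p ∈ A ×ˢ A, ∫ t in Set.Ioi (0:ℝ), F p t
        = (a p.1 * a p.2) * (|(p.1:ℝ)-(p.2:ℝ)| ^ α * c) := by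
      intro p _
      rw [hF]
      simp only []
      rw [MeasureTheory.integral_const_mul, (integ_scaled hs0 hs2 _).2]
    calc S * c = ∑ p ∈ A ×ˢ A, (a p.1 * a p.2) * (|(p.1:ℝ)-(p.2:ℝ)| ^ α * c) := by
          rw [hS, Finset.sum_product, Finset.sum_mul]
          apply Finset.sum_congr rfl; intro k _
          rw [Finset.sum_mul]
          apply Finset.sum_congr rfl; intro l _
          ring
      _ = ∑ p ∈ A ×ˢ A, ∫ t in Set.Ioi (0:ℝ), F p t :=
          Finset.sum_congr rfl (fun p hp => (h1 p hp).symm)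
      _ = ∫ t in Set.Ioi (0:ℝ), ∑ p ∈ A ×ˢ A, F p t :=
          (MeasureTheory.integral_finset_sum (A ×ˢ A) hFint).symm
      _ = ∫ t in Set.Ioi (0:ℝ), (-1:ℝ)^(D+1) * (q t * t ^ (-1-α)) := by
          apply MeasureTheory.integral_congr_ae
          exact MeasureTheory.ae_of_all _ (fun t => hpoint t)
      _ = (-1:ℝ)^(D+1) * J := by
          rw [MeasureTheory.integral_const_mul]
  -- positivity of J
  obtain ⟨t₀, ht₀, hqt₀⟩ := exists_pos_point A a hne
  have hqt₀' : 0 < q t₀ := hqt₀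
  have hqcont : Continuous q := by
    rw [hqdef]
    apply Continuous.add
    · apply Continuous.pow
      apply continuous_finset_sum
      intro k _
      fun_prop
    · apply Continuous.pow
      apply continuous_finset_sum
      intro k _
      fun_prop
  obtain ⟨δ, hδpos, hball⟩ : ∃ δ > 0, ∀ u : ℝ, |u - t₀| < δ → 0 < q u := by
    obtain ⟨δ, hδpos, h⟩ := Metric.continuousAt_iff.mp (hqcont.continuousAt (x := t₀)) (q t₀) hqt₀'
    refine ⟨δ, hδpos, fun u hu => ?_⟩
    have := h (show dist u t₀ < δ by rwa [Real.dist_eq])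
    rw [Real.dist_eq] at this
    have habs := abs_lt.mp this
    linarith [habs.1]
  set ε := min δ t₀ with hε
  have hεδ : ε ≤ δ := min_le_left _ _
  have hεt : ε ≤ t₀ := min_le_right _ _
  have hεpos : 0 < ε := lt_min hδpos ht₀
  set x₁ := t₀ - ε/2 with hx₁
  set x₂ := t₀ + ε/2 with hx₂
  have hx₁pos : 0 < x₁ := by rw [hx₁]; linarith
  have hx12 : x₁ < x₂ := by rw [hx₁, hx₂]; linarith
  have hsub : Set.Ioc x₁ x₂ ⊆ Set.Ioi (0:ℝ) := fun u hu => lt_trans hx₁pos hu.1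
  have hII : IntervalIntegrable (fun t => q t * t ^ (-1-α)) volume x₁ x₂ := by
    rw [intervalIntegrable_iff_integrableOn_Ioc_of_le hx12.le]
    exact hqint.mono_set hsub
  have hpos2 : 0 < ∫ t in x₁..x₂, q t * t ^ (-1-α) := by
    apply intervalIntegral.intervalIntegral_pos_of_pos_on hII _ hx12
    intro u hu
    have hu0 : 0 < u := lt_trans hx₁pos hu.1
    refine mul_pos (hball u ?_) (Real.rpow_pos_of_pos hu0 _)
    rw [abs_lt]
    obtain ⟨h1, h2⟩ := hu
    rw [hx₁] at h1; rw [hx₂] at h2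
    constructor <;> linarith
  have hJpos : 0 < J := by
    have h3 : ∫ t in Set.Ioc x₁ x₂, q t * t ^ (-1-α) ≤ J := by
      apply MeasureTheory.setIntegral_mono_set hqint
      · apply MeasureTheory.ae_restrict_of_forall_mem measurableSet_Ioi
        intro u hu
        have hu0 : (0:ℝ) < u := hu
        have : 0 ≤ q u := by rw [hqdef]; positivity
        exact mul_nonneg this (Real.rpow_nonneg hu0.le _)
      · exact MeasureTheory.ae_of_all _ hsub
    calc (0:ℝ) < ∫ t in x₁..x₂, q t * t ^ (-1-α) := hpos2
      _ = ∫ t in Set.Ioc x₁ x₂, q t * t ^ (-1-α) := intervalIntegral.integral_of_le hx12.le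
      _ ≤ J := h3
  -- conclusion
  have hScc : S = ((-1:ℝ)^(D+1) * J) / c := by
    rw [eq_div_iff hcpos.ne']
    exact hSc
  rw [hScc]
  have hsign : (-1:ℝ)^D * (((-1:ℝ)^(D+1) * J) / c) = -(J/c) := by
    rw [show ((-1:ℝ)^(D+1) * J) / c = (-1:ℝ)^(D+1) * (J / c) from by ring,
      ← mul_assoc, ← pow_add, show D+(D+1) = 2*D+1 from by ring, pow_succ, pow_mul]
    norm_num
  rw [hsign]
  have : 0 < J / c := div_pos hJpos hcpos
  linarith
/-- Convolution of finitely supported sequences: `(a*a')_m = Σ_{k-l=m} a_k a'_l`. -/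
noncomputable def seqConv (a a' : ℤ → ℝ) (m : ℤ) : ℝ := ∑ᶠ k : ℤ, a k * a' (k - m)

/-- if `a` is a nonzero finitely supported real sequence whose moments of
order up to `D` vanish, then `(−1)^D Σ_{k,l} a_k a_l |k−l|^{2D+s} < 0` for `0 < s < 2`;
equivalently `(−1)^D Σ_m (a*a)_m |m|^{2D+s} < 0`. -/
theorem stmt_0 (D : ℕ) (s : ℝ) (hs0 : 0 < s) (hs2 : s < 2)
    (a : ℤ → ℝ) (hfin : (Function.support a).Finite) (hne : a ≠ 0)
    (hmom : ∀ k : ℕ, k ≤ D → ∑ᶠ j : ℤ, a j * (j : ℝ) ^ k = 0) :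
    (-1 : ℝ) ^ D * ∑ᶠ k : ℤ, ∑ᶠ l : ℤ, a k * a l * |(k : ℝ) - (l : ℝ)| ^ (2 * (D : ℝ) + s) < 0
    ∧
    (-1 : ℝ) ^ D * ∑ᶠ m : ℤ, seqConv a a m * |(m : ℝ)| ^ (2 * (D : ℝ) + s) < 0 := by
  classical
  set A : Finset ℤ := hfin.toFinset with hAdef
  have hmemA : ∀ j : ℤ, j ∈ A ↔ a j ≠ 0 := by
    intro j
    rw [hAdef, Set.Finite.mem_toFinset, Function.mem_support]
  have hA : ∀ k : ℕ, k ≤ D → ∑ j ∈ A, a j * (j:ℝ)^k = 0 := by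
    intro k hk
    have hsub : Function.support (fun j : ℤ => a j * (j:ℝ)^k) ⊆ ↑A := by
      intro j hj
      rw [Function.mem_support] at hj
      have : a j ≠ 0 := fun h => hj (by rw [h, zero_mul])
      exact Finset.mem_coe.mpr ((hmemA j).mpr this)
    rw [← finsum_eq_sum_of_support_subset _ hsub]
    exact hmom k hk
  have hne' : ∃ k ∈ A, a k ≠ 0 := by
    obtain ⟨j, hj⟩ := Function.ne_iff.mp hne
    exact ⟨j, (hmemA j).mpr hj, hj⟩
  have hcore := core D hs0 hs2 A a hA hne'
  set w : ℤ → ℝ := fun m => |(m:ℝ)| ^ (2 * (D:ℝ) + s) with hw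
  constructor
  · -- first statement
    have inner : ∀ k : ℤ, ∑ᶠ l : ℤ, a k * a l * |(k:ℝ) - (l:ℝ)| ^ (2 * (D:ℝ) + s)
        = ∑ l ∈ A, a k * a l * |(k:ℝ) - (l:ℝ)| ^ (2 * (D:ℝ) + s) := by
      intro k
      apply finsum_eq_sum_of_support_subset
      intro l hl
      rw [Function.mem_support] at hl
      have : a l ≠ 0 := fun h => hl (by rw [h, mul_zero, zero_mul])
      exact Finset.mem_coe.mpr ((hmemA l).mpr this)
    have outer : ∑ᶠ k : ℤ, ∑ᶠ l : ℤ, a k * a l * |(k:ℝ) - (l:ℝ)| ^ (2 * (D:ℝ) + s)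
        = ∑ k ∈ A, ∑ l ∈ A, a k * a l * |(k:ℝ) - (l:ℝ)| ^ (2 * (D:ℝ) + s) := by
      rw [finsum_congr inner]
      apply finsum_eq_sum_of_support_subset
      intro k hk
      rw [Function.mem_support] at hk
      have : a k ≠ 0 := by
        intro h
        apply hk
        apply Finset.sum_eq_zero
        intro l _
        rw [h, zero_mul, zero_mul]
      exact Finset.mem_coe.mpr ((hmemA k).mpr this)
    rw [outer]
    exact hcore
  · -- second statement
    set M : Finset ℤ := Finset.image (fun p : ℤ×ℤ => p.1 - p.2) (A ×ˢ A) with hM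
    have hconv : ∀ m : ℤ, seqConv a a m = ∑ k ∈ A, a k * a (k - m) := by
      intro m
      apply finsum_eq_sum_of_support_subset
      intro k hk
      rw [Function.mem_support] at hk
      have : a k ≠ 0 := fun h => hk (by rw [h, zero_mul])
      exact Finset.mem_coe.mpr ((hmemA k).mpr this)
    have hsupp2 : Function.support (fun m : ℤ => seqConv a a m * w m) ⊆ ↑M := by
      intro m hm
      rw [Function.mem_support] at hm
      have hconvne : seqConv a a m ≠ 0 := fun h => hm (by rw [h, zero_mul])
      rw [hconv m] at hconvne
      obtain ⟨k, hkA, hk⟩ := Finset.exists_ne_zero_of_sum_ne_zero hconvne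
      have hak : a k ≠ 0 := fun h => hk (by rw [h, zero_mul])
      have hakm : a (k - m) ≠ 0 := fun h => hk (by rw [h, mul_zero])
      apply Finset.mem_coe.mpr
      rw [hM]
      apply Finset.mem_image.mpr
      refine ⟨(k, k - m), Finset.mem_product.mpr ⟨hkA, (hmemA _).mpr hakm⟩, by omega⟩
    have e2 : ∑ᶠ m : ℤ, seqConv a a m * w m = ∑ m ∈ M, seqConv a a m * w m :=
      finsum_eq_sum_of_support_subset _ hsupp2
    have e3 : ∑ m ∈ M, seqConv a a m * w m = ∑ k ∈ A, ∑ l ∈ A, a k * a l * w (k - l) := by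
      calc ∑ m ∈ M, seqConv a a m * w m = ∑ m ∈ M, ∑ k ∈ A, a k * a (k - m) * w m := by
            apply Finset.sum_congr rfl; intro m _
            rw [hconv m, Finset.sum_mul]
        _ = ∑ k ∈ A, ∑ m ∈ M, a k * a (k - m) * w m := Finset.sum_comm
        _ = ∑ k ∈ A, ∑ l ∈ A, a k * a l * w (k - l) := by
            apply Finset.sum_congr rfl; intro k hk
            have hak : a k ≠ 0 := (hmemA k).mp hk
            have hL : ∑ m ∈ M, a k * a (k - m) * w m = ∑ᶠ m : ℤ, a k * a (k - m) * w m := by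
              symm
              apply finsum_eq_sum_of_support_subset
              intro m hm
              rw [Function.mem_support] at hm
              have hakm : a (k - m) ≠ 0 := by
                intro h
                apply hm
                rw [h, mul_zero, zero_mul]
              apply Finset.mem_coe.mpr
              rw [hM]
              apply Finset.mem_image.mpr
              refine ⟨(k, k - m), Finset.mem_product.mpr ⟨hk, (hmemA _).mpr hakm⟩, by omega⟩
            have hR : ∑ l ∈ A, a k * a l * w (k - l) = ∑ᶠ l : ℤ, a k * a l * w (k - l) := by
              symm
              apply finsum_eq_sum_of_support_subset
              intro l hl
              rw [Function.mem_support] at hl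
              have : a l ≠ 0 := fun h => hl (by rw [h, mul_zero, zero_mul])
              exact Finset.mem_coe.mpr ((hmemA l).mpr this)
            rw [hL, hR]
            have := finsum_comp_equiv (Equiv.subLeft k) (f := fun m : ℤ => a k * a (k - m) * w m)
            rw [← this]
            apply finsum_congr
            intro l
            have : (Equiv.subLeft k) l = k - l := rfl
            rw [this, sub_sub_cancel]
    have e4 : ∑ k ∈ A, ∑ l ∈ A, a k * a l * w (k - l)
        = ∑ k ∈ A, ∑ l ∈ A, a k * a l * |(k:ℝ) - (l:ℝ)| ^ (2 * (D:ℝ) + s) := by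
      apply Finset.sum_congr rfl; intro k _
      apply Finset.sum_congr rfl; intro l _
      rw [hw]
      congr 2
      push_cast
      ring
    rw [e2, e3, e4]
    exact hcore
end

section
/- For every real p > 0 and all reals u, v ≥ 0, ∫_0^u (∫_0^v |x−y|^p dy) dx = (u^{p+2} + v^{p+2} − |u−v|^{p+2}) / ((p+1)(p+2)). -/
open Filter

lemma hasDerivAt_mul_abs_rpow (p : ℝ) (hp : 0 < p) (t : ℝ) :
    HasDerivAt (fun s : ℝ => s * |s| ^ p) ((p + 1) * |t| ^ p) t := by
  rcases lt_trichotomy t 0 with ht | rfl | ht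
  · have h1 : HasDerivAt (fun s : ℝ => -((-s) ^ (p + 1)))
        ((p + 1) * (-t) ^ (p + 1 - 1)) t := by
      have h0 : HasDerivAt (fun s : ℝ => (-s) ^ (p + 1))
          ((p + 1) * (-t) ^ (p + 1 - 1) * (-1)) t := by
        have := (Real.hasDerivAt_rpow_const (x := -t) (p := p + 1)
          (Or.inl (by linarith))).comp t (hasDerivAt_neg t)
        simpa [Function.comp_def] using this
      simpa [Pi.neg_def] using h0.neg
    have h2 : HasDerivAt (fun s : ℝ => s * |s| ^ p) ((p + 1) * (-t) ^ (p + 1 - 1)) t := by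
      apply h1.congr_of_eventuallyEq
      filter_upwards [eventually_lt_nhds ht] with s hs
      rw [abs_of_neg hs, Real.rpow_add_one (by linarith : (-s : ℝ) ≠ 0)]
      ring
    rw [show p + 1 - 1 = p by ring] at h2
    rwa [abs_of_neg ht]
  · rw [hasDerivAt_iff_tendsto_slope]
    have hT : Filter.Tendsto (fun s : ℝ => |s| ^ p) (nhds 0) (nhds ((p + 1) * |(0:ℝ)| ^ p)) := by
      have hc : Continuous (fun s : ℝ => |s| ^ p) :=
        continuous_abs.rpow_const (fun x => Or.inr hp.le)
      simpa [Real.zero_rpow hp.ne'] using hc.tendsto 0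
    apply hT.mono_left nhdsWithin_le_nhds |>.congr'
    filter_upwards [self_mem_nhdsWithin] with s hs
    have hs' : s ≠ 0 := hs
    rw [slope_def_field]
    simp only [zero_mul, sub_zero]
    rw [mul_div_cancel_left₀ _ hs']
  · have h1 : HasDerivAt (fun s : ℝ => s ^ (p + 1)) ((p + 1) * t ^ (p + 1 - 1)) t :=
      Real.hasDerivAt_rpow_const (Or.inl ht.ne')
    have h2 : HasDerivAt (fun s : ℝ => s * |s| ^ p) ((p + 1) * t ^ (p + 1 - 1)) t := by
      apply h1.congr_of_eventuallyEq
      filter_upwards [eventually_gt_nhds ht] with s hs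
      rw [abs_of_pos hs, Real.rpow_add_one hs.ne']
      ring
    rw [show p + 1 - 1 = p by ring] at h2
    rwa [abs_of_pos ht]

lemma my_hasDerivAt_abs_rpow (p : ℝ) (hp : 0 < p) (t : ℝ) :
    HasDerivAt (fun s : ℝ => |s| ^ (p + 2)) ((p + 2) * (t * |t| ^ p)) t := by
  have h1 := (hasDerivAt_id t).mul (hasDerivAt_mul_abs_rpow p hp t)
  have heq : (fun s : ℝ => s * (s * |s| ^ p)) = fun s : ℝ => |s| ^ (p + 2) := by
    funext s
    rcases eq_or_ne s 0 with rfl | hs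
    · simp [Real.zero_rpow (by positivity : p + 2 ≠ 0)]
    · have h2 : s * (s * |s| ^ p) = |s| ^ (2:ℝ) * |s| ^ p := by
        rw [show |s| ^ (2:ℝ) = |s| ^ (2:ℕ) by rw [← Real.rpow_natCast]; norm_num, sq_abs]
        ring
      rw [h2, ← Real.rpow_add (abs_pos.2 hs)]
      ring_nf
  simp only [Pi.mul_def, id_eq] at h1
  rw [heq] at h1
  convert h1 using 1
  · rfl
  · rfl
  · ring

/-- for `p > 0` and `u, v ≥ 0`,
`∫_0^u (∫_0^v |x−y|^p dy) dx = (u^{p+2} + v^{p+2} − |u−v|^{p+2}) / ((p+1)(p+2))`. -/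
theorem stmt_1 (p : ℝ) (hp : 0 < p) (u v : ℝ) (hu : 0 ≤ u) (hv : 0 ≤ v) :
    ∫ x in (0:ℝ)..u, (∫ y in (0:ℝ)..v, |x - y| ^ p) =
      (u ^ (p + 2) + v ^ (p + 2) - |u - v| ^ (p + 2)) / ((p + 1) * (p + 2)) := by
  have hp1 : (p : ℝ) + 1 ≠ 0 := by positivity
  have hp2 : (p : ℝ) + 2 ≠ 0 := by positivity
  have hcont : Continuous (fun t : ℝ => |t| ^ p) :=
    continuous_abs.rpow_const (fun x => Or.inr hp.le)
  have inner : ∀ x : ℝ, (∫ y in (0:ℝ)..v, |x - y| ^ p)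
      = (x * |x| ^ p - (x - v) * |x - v| ^ p) / (p + 1) := by
    intro x
    have hF : ∀ y ∈ Set.uIcc (0:ℝ) v, HasDerivAt
        (fun y : ℝ => -((x - y) * |x - y| ^ p) / (p + 1)) (|x - y| ^ p) y := by
      intro y _
      have h1 := (hasDerivAt_mul_abs_rpow p hp (x - y)).comp y
        ((hasDerivAt_id y).const_sub x)
      have h2 := (h1.neg).div_const (p + 1)
      convert h2 using 1
      · rfl
      · rfl
      · rfl
      · field_simp
    have hc2 : Continuous fun y : ℝ => |x - y| ^ p :=
      hcont.comp (continuous_const.sub continuous_id)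
    rw [intervalIntegral.integral_eq_sub_of_hasDerivAt hF (hc2.intervalIntegrable _ _)]
    rw [sub_zero]
    ring
  simp_rw [inner]
  have hG : ∀ x ∈ Set.uIcc (0:ℝ) u, HasDerivAt
      (fun x : ℝ => (|x| ^ (p + 2) - |x - v| ^ (p + 2)) / ((p + 1) * (p + 2)))
      ((x * |x| ^ p - (x - v) * |x - v| ^ p) / (p + 1)) x := by
    intro x _
    have h1 := my_hasDerivAt_abs_rpow p hp x
    have h2 := (my_hasDerivAt_abs_rpow p hp (x - v)).comp x ((hasDerivAt_id x).sub_const v)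
    have h3 := (h1.sub h2).div_const ((p + 1) * (p + 2))
    convert h3 using 1
    · rfl
    · rfl
    · rfl
    · field_simp
  have hcG : Continuous fun x : ℝ => (x * |x| ^ p - (x - v) * |x - v| ^ p) / (p + 1) :=
    ((continuous_id.mul hcont).sub ((continuous_id.sub continuous_const).mul
      (hcont.comp (continuous_id.sub continuous_const)))).div_const _
  rw [intervalIntegral.integral_eq_sub_of_hasDerivAt hG (hcG.intervalIntegrable _ _)]
  simp only [abs_zero, zero_sub, abs_neg, abs_of_nonneg hu, abs_of_nonneg hv,
    Real.zero_rpow hp2]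
  ring
end

section
/- Let L ≥ 1 and let b be a real sequence supported in {−L+1, …, L−1} such that Σ_j b_j j^k = 0 for every integer 0 ≤ k < q, where q ≥ 1. Let p > 0 be a real number with p < q. Then there exists a constant K > 0 such that for every integer i with |i| ≥ 2L, | Σ_j b_j |i+j|^p | ≤ K |i|^{p−q}. -/
open Set Finset

lemma aux_idw_eq {n : ℕ} {f : ℝ → ℝ} {u s : Set ℝ}
    (hu : IsOpen u) (hf : ContDiffOn ℝ n f u) (hs : UniqueDiffOn ℝ s) (hsu : s ⊆ u)
    {x : ℝ} (hx : x ∈ s) {k : ℕ} (hk : k ≤ n) :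
    iteratedDerivWithin k f s x = iteratedDeriv k f x := by
  have A : HasFTaylorSeriesUpToOn (n : ℕ∞) f (ftaylorSeriesWithin ℝ f u) u :=
    hf.ftaylorSeriesWithin hu.uniqueDiffOn
  have B := ((A.mono hsu).eq_iteratedFDerivWithin_of_uniqueDiffOn
    (by exact_mod_cast hk) hs hx).symm
  have C := A.eq_iteratedFDerivWithin_of_uniqueDiffOn
    (by exact_mod_cast hk) hu.uniqueDiffOn (hsu hx)
  have D := iteratedFDerivWithin_of_isOpen (𝕜 := ℝ) (f := f) k hu (hsu hx)
  rw [iteratedDerivWithin_eq_iteratedFDerivWithin, iteratedDeriv_eq_iteratedFDeriv, B, C, D]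

lemma aux_taylor (p : ℝ) (q : ℕ) (hq : 1 ≤ q) :
    ∃ a : ℕ → ℝ, ∃ C : ℝ, 0 ≤ C ∧ ∀ x : ℝ, |x| ≤ 1/2 →
      |(1 + x) ^ p - ∑ k ∈ Finset.range q, a k * x ^ k| ≤ C * |x| ^ q := by
  obtain ⟨m, rfl⟩ : ∃ m, q = m + 1 := ⟨q - 1, (Nat.succ_pred_eq_of_pos hq).symm⟩
  set H : ℝ → ℝ := fun y => (1 + y) ^ p with hH
  set G : ℝ → ℝ := fun y => (1 + -y) ^ p with hG
  set u : Set ℝ := Ioo (-1 : ℝ) 1 with hu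
  have huo : IsOpen u := isOpen_Ioo
  have hs : (Icc (0:ℝ) (1/2) : Set ℝ) ⊆ u := by
    intro y hy; simp only [hu, Set.mem_Ioo, Set.mem_Icc] at *; constructor <;> nlinarith [hy.1, hy.2]
  have hsu : UniqueDiffOn ℝ (Icc (0:ℝ) (1/2)) := uniqueDiffOn_Icc (by norm_num)
  have hHc : ContDiffOn ℝ (m + 1 : ℕ) H u := by
    apply ContDiffOn.rpow_const_of_ne
    · exact (contDiff_const.add contDiff_id).contDiffOn
    · intro y hy; simp only [hu, Set.mem_Ioo] at hy; nlinarith [hy.1]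
  have hGc : ContDiffOn ℝ (m + 1 : ℕ) G u := by
    apply ContDiffOn.rpow_const_of_ne
    · exact (contDiff_const.add contDiff_neg).contDiffOn
    · intro y hy; simp only [hu, Set.mem_Ioo] at hy; nlinarith [hy.2]
  have h2 : (0:ℝ) ≤ 1/2 := by norm_num
  obtain ⟨C₁, hC₁⟩ := exists_taylor_mean_remainder_bound (n := m) h2
    ((hHc.mono hs).of_le (by exact_mod_cast le_refl _))
  obtain ⟨C₂, hC₂⟩ := exists_taylor_mean_remainder_bound (n := m) h2
    ((hGc.mono hs).of_le (by exact_mod_cast le_refl _))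
  -- derivative values
  set d : ℕ → ℝ := fun k => iteratedDeriv k H 0 with hd
  have hGd : ∀ k, iteratedDeriv k G 0 = (-1 : ℝ) ^ k * d k := by
    intro k
    have : G = fun y => H (-y) := by funext y; simp [hG, hH]
    rw [this, iteratedDeriv_comp_neg k H 0, neg_zero, smul_eq_mul]
  set a : ℕ → ℝ := fun k => ((Nat.factorial k : ℝ))⁻¹ * d k with ha
  have h02 : (0:ℝ) ∈ Icc (0:ℝ) (1/2) := by norm_num
  have hTH : ∀ x : ℝ, taylorWithinEval H m (Icc 0 (1/2)) 0 x
      = ∑ k ∈ Finset.range (m+1), a k * x ^ k := by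
    intro x
    rw [taylor_within_apply]
    refine Finset.sum_congr rfl fun k hk => ?_
    rw [aux_idw_eq huo hHc hsu hs h02
      ((Nat.le_of_lt_succ (Finset.mem_range.mp hk)).trans (Nat.le_succ m))]
    simp only [ha, smul_eq_mul, sub_zero, hd]
    ring
  have hTG : ∀ x : ℝ, taylorWithinEval G m (Icc 0 (1/2)) 0 x
      = ∑ k ∈ Finset.range (m+1), a k * (-x) ^ k := by
    intro x
    rw [taylor_within_apply]
    refine Finset.sum_congr rfl fun k hk => ?_
    rw [aux_idw_eq huo hGc hsu hs h02
      ((Nat.le_of_lt_succ (Finset.mem_range.mp hk)).trans (Nat.le_succ m))]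
    rw [hGd k]
    simp only [ha, smul_eq_mul, sub_zero]
    ring
  refine ⟨a, |C₁| + |C₂| + 1, by positivity, fun x hx => ?_⟩
  rcases le_or_gt 0 x with hx0 | hx0
  · have hxm : x ∈ Icc (0:ℝ) (1/2) := ⟨hx0, by rwa [abs_of_nonneg hx0] at hx⟩
    have := hC₁ x hxm
    rw [hTH x, Real.norm_eq_abs, sub_zero] at this
    calc |(1 + x) ^ p - ∑ k ∈ Finset.range (m+1), a k * x ^ k| ≤ C₁ * x ^ (m+1) := this
      _ ≤ (|C₁| + |C₂| + 1) * |x| ^ (m+1) := by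
          rw [abs_of_nonneg hx0]
          have hxp : (0:ℝ) ≤ x ^ (m+1) := pow_nonneg hx0 _
          nlinarith [abs_nonneg C₁, abs_nonneg C₂, le_abs_self C₁]
  · have hxm : -x ∈ Icc (0:ℝ) (1/2) := ⟨by linarith, by rwa [abs_of_neg hx0] at hx⟩
    have := hC₂ (-x) hxm
    rw [hTG (-x), Real.norm_eq_abs, sub_zero, neg_neg] at this
    have hGx : G (-x) = (1 + x) ^ p := by simp [hG]
    rw [hGx] at this
    calc |(1 + x) ^ p - ∑ k ∈ Finset.range (m+1), a k * x ^ k| ≤ C₂ * (-x) ^ (m+1) := this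
      _ ≤ (|C₁| + |C₂| + 1) * |x| ^ (m+1) := by
          rw [abs_of_neg hx0]
          have hxp : (0:ℝ) ≤ (-x) ^ (m+1) := pow_nonneg (by linarith) _
          nlinarith [abs_nonneg C₁, abs_nonneg C₂, le_abs_self C₂]


/-- if `b` is supported in `{−L+1,…,L−1}` with vanishing moments of order
`< q` (`q ≥ 1`), and `0 < p < q` is real, then there is `K > 0` with
`|Σ_j b_j |i+j|^p| ≤ K |i|^{p−q}` for every integer `i` with `|i| ≥ 2L`. -/
theorem stmt_16 (L : ℕ) (hL : 1 ≤ L) (b : ℤ → ℝ)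
    (hsupp : ∀ j : ℤ, b j ≠ 0 → -((L : ℤ) - 1) ≤ j ∧ j ≤ (L : ℤ) - 1)
    (q : ℕ) (hq : 1 ≤ q)
    (hmom : ∀ k : ℕ, k < q → ∑ᶠ j : ℤ, b j * (j : ℝ) ^ k = 0)
    (p : ℝ) (hp0 : 0 < p) (hpq : p < q) :
    ∃ K : ℝ, 0 < K ∧ ∀ i : ℤ, 2 * (L : ℤ) ≤ |i| →
      |∑ᶠ j : ℤ, b j * |(i : ℝ) + (j : ℝ)| ^ p| ≤ K * |(i : ℝ)| ^ (p - (q : ℝ)) := by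
  classical
  set F : Finset ℤ := Finset.Icc (-((L:ℤ)-1)) ((L:ℤ)-1) with hF
  have hsubF : ∀ c : ℤ → ℝ, Function.support (fun j => b j * c j) ⊆ ↑F := by
    intro c j hj
    have hbj : b j ≠ 0 := left_ne_zero_of_mul hj
    obtain ⟨h1, h2⟩ := hsupp j hbj
    simp only [hF, Finset.coe_Icc, Set.mem_Icc]
    exact ⟨h1, h2⟩
  obtain ⟨a, C, hC0, hC⟩ := aux_taylor p q hq
  set M : ℝ := ∑ j ∈ F, |b j| * |(j:ℝ)| ^ q with hM
  have hM0 : 0 ≤ M := Finset.sum_nonneg fun j _ => by positivity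
  refine ⟨C * M + 1, by positivity, fun i hi => ?_⟩
  have hiz : i ≠ 0 := by
    rintro rfl
    simp only [abs_zero] at hi
    omega
  have hine : (i:ℝ) ≠ 0 := Int.cast_ne_zero.mpr hiz
  set n : ℝ := |(i:ℝ)| with hn
  have hn0 : 0 < n := abs_pos.mpr hine
  have hnL : 2 * (L:ℝ) ≤ n := by
    have h := hi
    have : ((2 * (L:ℤ) : ℤ) : ℝ) ≤ ((|i| : ℤ) : ℝ) := by exact_mod_cast h
    rw [Int.cast_abs] at this
    push_cast at this ⊢
    linarith
  have hjF : ∀ j ∈ F, |(j:ℝ)| ≤ (L:ℝ) - 1 := by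
    intro j hj
    rw [hF, Finset.mem_Icc] at hj
    have : |j| ≤ (L:ℤ) - 1 := abs_le.mpr ⟨by linarith [hj.1], hj.2⟩
    have : ((|j| : ℤ) : ℝ) ≤ (((L:ℤ) - 1 : ℤ) : ℝ) := by exact_mod_cast this
    rw [Int.cast_abs] at this
    push_cast at this ⊢
    linarith
  have hxle : ∀ j ∈ F, |(j:ℝ)/(i:ℝ)| ≤ 1/2 := by
    intro j hj
    rw [abs_div, ← hn, div_le_iff₀ hn0]
    have := hjF j hj
    have hL1 : (1:ℝ) ≤ (L:ℝ) := by exact_mod_cast hL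
    linarith
  have hese : ∀ j ∈ F, |(i:ℝ) + (j:ℝ)| ^ p = n ^ p * ((1:ℝ) + (j:ℝ)/(i:ℝ)) ^ p := by
    intro j hj
    have hx := abs_le.mp (hxle j hj)
    have h1 : (0:ℝ) < 1 + (j:ℝ)/(i:ℝ) := by linarith [hx.1]
    have heq : (i:ℝ) + (j:ℝ) = (i:ℝ) * (1 + (j:ℝ)/(i:ℝ)) := by field_simp
    rw [heq, abs_mul, abs_of_pos h1, ← hn, Real.mul_rpow (le_of_lt hn0) (le_of_lt h1)]
  -- cancellation of the Taylor polynomial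
  have hzero : ∑ j ∈ F, b j * (n ^ p * ∑ k ∈ Finset.range q, a k * ((j:ℝ)/(i:ℝ)) ^ k) = 0 := by
    have hterm : ∀ j ∈ F, b j * (n ^ p * ∑ k ∈ Finset.range q, a k * ((j:ℝ)/(i:ℝ)) ^ k)
        = ∑ k ∈ Finset.range q, (n ^ p * a k / (i:ℝ) ^ k) * (b j * (j:ℝ) ^ k) := by
      intro j hj
      rw [Finset.mul_sum, Finset.mul_sum]
      refine Finset.sum_congr rfl fun k _ => ?_
      have hik : ((i:ℝ)) ^ k ≠ 0 := pow_ne_zero _ hine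
      rw [div_pow]
      field_simp
    rw [Finset.sum_congr rfl hterm, Finset.sum_comm]
    refine Finset.sum_eq_zero fun k hk => ?_
    rw [← Finset.mul_sum]
    have hm := hmom k (Finset.mem_range.mp hk)
    rw [finsum_eq_sum_of_support_subset _ (hsubF (fun j => (j:ℝ) ^ k))] at hm
    rw [hm, mul_zero]
  rw [finsum_eq_sum_of_support_subset _ (hsubF (fun j => |(i:ℝ) + (j:ℝ)| ^ p))]
  have hsplit : ∑ j ∈ F, b j * |(i:ℝ) + (j:ℝ)| ^ p
      = ∑ j ∈ F, b j * (n ^ p * (((1:ℝ) + (j:ℝ)/(i:ℝ)) ^ p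
          - ∑ k ∈ Finset.range q, a k * ((j:ℝ)/(i:ℝ)) ^ k)) := by
    rw [← sub_zero (∑ j ∈ F, b j * |(i:ℝ) + (j:ℝ)| ^ p), ← hzero, ← Finset.sum_sub_distrib]
    refine Finset.sum_congr rfl fun j hj => ?_
    rw [hese j hj]
    ring
  rw [hsplit]
  have hnp : (0:ℝ) < n ^ p := Real.rpow_pos_of_pos hn0 p
  have hnpq : (0:ℝ) < n ^ (p - (q:ℝ)) := Real.rpow_pos_of_pos hn0 _
  calc |∑ j ∈ F, b j * (n ^ p * (((1:ℝ) + (j:ℝ)/(i:ℝ)) ^ p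
          - ∑ k ∈ Finset.range q, a k * ((j:ℝ)/(i:ℝ)) ^ k))|
      ≤ ∑ j ∈ F, |b j * (n ^ p * (((1:ℝ) + (j:ℝ)/(i:ℝ)) ^ p
          - ∑ k ∈ Finset.range q, a k * ((j:ℝ)/(i:ℝ)) ^ k))| :=
        Finset.abs_sum_le_sum_abs _ _
    _ ≤ ∑ j ∈ F, (C * n ^ (p - (q:ℝ))) * (|b j| * |(j:ℝ)| ^ q) := by
        refine Finset.sum_le_sum fun j hj => ?_
        rw [abs_mul, abs_mul, abs_of_pos hnp]
        have hR := hC ((j:ℝ)/(i:ℝ)) (hxle j hj)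
        have hstep : |b j| * (n ^ p * |((1:ℝ) + (j:ℝ)/(i:ℝ)) ^ p
            - ∑ k ∈ Finset.range q, a k * ((j:ℝ)/(i:ℝ)) ^ k|)
            ≤ |b j| * (n ^ p * (C * |(j:ℝ)/(i:ℝ)| ^ q)) := by
          have := mul_le_mul_of_nonneg_left hR (le_of_lt hnp)
          exact mul_le_mul_of_nonneg_left this (abs_nonneg _)
        refine hstep.trans (le_of_eq ?_)
        have hpow : n ^ p = n ^ (p - (q:ℝ)) * n ^ (q:ℕ) := by
          rw [← Real.rpow_natCast n q, ← Real.rpow_add hn0, sub_add_cancel]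
        rw [abs_div, ← hn, div_pow, hpow]
        have hnq : n ^ (q:ℕ) ≠ 0 := by positivity
        field_simp
    _ = (C * M + 1) * n ^ (p - (q:ℝ)) - n ^ (p - (q:ℝ)) := by
        rw [← Finset.mul_sum, ← hM]
        ring
    _ ≤ (C * M + 1) * n ^ (p - (q:ℝ)) := by linarith
end

section
/- Let a be a finitely supported real sequence supported in {0,…,L−1} with Σ_j a_j j^k = 0 for all integers 0 ≤ k < M (M ≥ 1), let δ > 0, let T > 0, and let f : ℝ → ℝ be M times continuously differentiable on [0,T]. Then for every integer i ≥ 0 with (i+L−1)δ ≤ T, | Σ_{j=0}^{L−1} a_j f((i+j)δ) | ≤ ( Σ_{j=0}^{L−1} |a_j| j^M / M! ) · δ^M · sup_{t ∈ [iδ, (i+L−1)δ]} |f^{(M)}(t)|. -/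
open Set

/-- Auxiliary: iterated derivatives within a closed subinterval of `[0,T]` agree with those
within `[0,T]`, for a function that is `C^M` on `[0,T]`. -/
lemma aux_iteratedDerivWithin_subIcc {T : ℝ} (hT : 0 < T) {M : ℕ}
    {f : ℝ → ℝ} (hf : ContDiffOn ℝ (M : ℕ∞) f (Set.Icc 0 T))
    {c d : ℝ} (hcd : c < d) (hsub : Set.Icc c d ⊆ Set.Icc 0 T)
    {m : ℕ} (hm : m ≤ M) {y : ℝ} (hy : y ∈ Set.Icc c d) :
    iteratedDerivWithin m f (Set.Icc c d) y = iteratedDerivWithin m f (Set.Icc 0 T) y := by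
  have H := ((hf.ftaylorSeriesWithin (uniqueDiffOn_Icc hT)).mono hsub)
  have h1 := H.eq_iteratedFDerivWithin_of_uniqueDiffOn (by exact_mod_cast hm)
    (uniqueDiffOn_Icc hcd) hy
  rw [iteratedDerivWithin_eq_iteratedFDerivWithin, iteratedDerivWithin_eq_iteratedFDerivWithin,
    ← h1]
  rfl

/-- Taylor–Lagrange bound on the discrete `a`-difference of a drift `f`:
if `a` is supported in `{0,…,L−1}` with vanishing moments of order `< M`, `δ > 0`,
and `f` is `M` times continuously differentiable on `[0,T]`, then for `i ≥ 0` with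
`(i+L−1)δ ≤ T`,
`|Σ_j a_j f((i+j)δ)| ≤ (Σ_j |a_j| j^M / M!) δ^M sup_{t∈[iδ,(i+L−1)δ]} |f^{(M)}(t)|`. -/
theorem stmt_17 (L M : ℕ) (hL : 1 ≤ L) (hM : 1 ≤ M) (a : ℕ → ℝ)
    (hmom : ∀ k : ℕ, k < M → ∑ j ∈ Finset.range L, a j * (j : ℝ) ^ k = 0)
    (δ T : ℝ) (hδ : 0 < δ) (hT : 0 < T)
    (f : ℝ → ℝ) (hf : ContDiffOn ℝ (M : ℕ∞) f (Set.Icc 0 T)) :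
    ∀ i : ℕ, ((i : ℝ) + (L : ℝ) - 1) * δ ≤ T →
      |∑ j ∈ Finset.range L, a j * f (((i : ℝ) + (j : ℝ)) * δ)|
        ≤ (∑ j ∈ Finset.range L, |a j| * (j : ℝ) ^ M / (Nat.factorial M : ℝ)) * δ ^ M *
          sSup ((fun t => |iteratedDerivWithin M f (Set.Icc 0 T) t|) ''
            Set.Icc ((i : ℝ) * δ) (((i : ℝ) + (L : ℝ) - 1) * δ)) := by
  intro i hi
  set x₀ : ℝ := (i : ℝ) * δ with hx₀def
  set b : ℝ := ((i : ℝ) + (L : ℝ) - 1) * δ with hbdef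
  have hL1 : (1 : ℝ) ≤ (L : ℝ) := by exact_mod_cast hL
  have hx₀0 : 0 ≤ x₀ := mul_nonneg (Nat.cast_nonneg i) hδ.le
  have hx₀b : x₀ ≤ b := by
    rw [hx₀def, hbdef]
    nlinarith
  have hsub : Set.Icc x₀ b ⊆ Set.Icc 0 T := Set.Icc_subset_Icc hx₀0 (by linarith)
  set C : ℝ := sSup ((fun t => |iteratedDerivWithin M f (Set.Icc 0 T) t|) ''
      Set.Icc x₀ b) with hCdef
  -- continuity of the M-th derivative, boundedness of the sup
  have hcont : ContinuousOn (fun t => |iteratedDerivWithin M f (Set.Icc 0 T) t|)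
      (Set.Icc x₀ b) :=
    ((hf.continuousOn_iteratedDerivWithin le_rfl (uniqueDiffOn_Icc hT)).mono hsub).abs
  have hbdd : BddAbove ((fun t => |iteratedDerivWithin M f (Set.Icc 0 T) t|) ''
      Set.Icc x₀ b) := (isCompact_Icc.image_of_continuousOn hcont).bddAbove
  have hmemx₀ : x₀ ∈ Set.Icc x₀ b := Set.left_mem_Icc.2 hx₀b
  have hC0 : 0 ≤ C := le_trans (abs_nonneg _) (le_csSup hbdd ⟨x₀, hmemx₀, rfl⟩)
  -- the fixed Taylor polynomial of f at x₀ with derivatives within [0,T]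
  set Q : ℝ → ℝ := fun x => ∑ k ∈ Finset.range M,
      ((Nat.factorial k : ℝ)⁻¹ * (x - x₀) ^ k) * iteratedDerivWithin k f (Set.Icc 0 T) x₀
    with hQdef
  -- the a-sum of Q vanishes by the moment conditions
  have hQ0 : ∑ j ∈ Finset.range L, a j * Q (((i : ℝ) + (j : ℝ)) * δ) = 0 := by
    have : ∀ j : ℕ, ((i : ℝ) + (j : ℝ)) * δ - x₀ = (j : ℝ) * δ := by
      intro j; rw [hx₀def]; ring
    simp only [hQdef, this, Finset.mul_sum]
    rw [Finset.sum_comm]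
    refine Finset.sum_eq_zero fun k hk => ?_
    have hkM : k < M := Finset.mem_range.1 hk
    have : ∀ j ∈ Finset.range L,
        a j * ((Nat.factorial k : ℝ)⁻¹ * ((j : ℝ) * δ) ^ k *
          iteratedDerivWithin k f (Set.Icc 0 T) x₀)
        = (a j * (j : ℝ) ^ k) * ((Nat.factorial k : ℝ)⁻¹ * δ ^ k *
            iteratedDerivWithin k f (Set.Icc 0 T) x₀) := by
      intro j _; ring
    rw [Finset.sum_congr rfl this, ← Finset.sum_mul, hmom k hkM, zero_mul]
  -- pointwise Taylor–Lagrange bound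
  have key : ∀ j : ℕ, j < L →
      |f (((i : ℝ) + (j : ℝ)) * δ) - Q (((i : ℝ) + (j : ℝ)) * δ)|
        ≤ C * ((j : ℝ) ^ M * δ ^ M) / (Nat.factorial M : ℝ) := by
    intro j hj
    rcases Nat.eq_zero_or_pos j with rfl | hjpos
    · -- j = 0 : the difference vanishes
      have hx : ((i : ℝ) + (0 : ℕ)) * δ = x₀ := by rw [hx₀def]; push_cast; ring
      have hQx₀ : Q x₀ = f x₀ := by
        simp only [hQdef]
        rw [Finset.sum_eq_single_of_mem 0 (Finset.mem_range.2 hM)]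
        · simp [iteratedDerivWithin_zero]
        · intro k _ hk0
          simp [zero_pow hk0]
      rw [hx, hQx₀, sub_self, abs_zero]
      have : (0 : ℝ) ≤ C * ((0 : ℕ) ^ M * δ ^ M) / (Nat.factorial M : ℝ) := by
        positivity
      exact this
    · -- j ≥ 1 : Taylor's theorem with Lagrange remainder on [x₀, x_j]
      set x : ℝ := ((i : ℝ) + (j : ℝ)) * δ with hxdef
      have hj1 : (1 : ℝ) ≤ (j : ℝ) := by exact_mod_cast hjpos
      have hx₀x : x₀ < x := by
        rw [hx₀def, hxdef]; nlinarith
      have hxb : x ≤ b := by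
        rw [hxdef, hbdef]
        have : (j : ℝ) ≤ (L : ℝ) - 1 := by
          have : (j : ℝ) + 1 ≤ (L : ℝ) := by exact_mod_cast hj
          linarith
        nlinarith
    -- the subinterval sits inside [x₀, b] hence inside [0, T]
      have hsubx : Set.Icc x₀ x ⊆ Set.Icc 0 T :=
        fun y hy => hsub ⟨hy.1, le_trans hy.2 hxb⟩
      obtain ⟨n, hn⟩ : ∃ n, M = n + 1 := ⟨M - 1, (Nat.succ_pred_eq_of_pos hM).symm⟩
      have hfx : ContDiffOn ℝ (n : ℕ∞) f (Set.Icc x₀ x) :=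
        (hf.of_le (by exact_mod_cast (by omega : n ≤ M))).mono hsubx
      have hf' : DifferentiableOn ℝ (iteratedDerivWithin n f (Set.Icc x₀ x)) (Set.Ioo x₀ x) := by
        refine (((hf.mono hsubx).differentiableOn_iteratedDerivWithin ?_
          (uniqueDiffOn_Icc hx₀x)).mono Set.Ioo_subset_Icc_self)
        exact_mod_cast (by omega : n < M)
      obtain ⟨x', hx', heq⟩ : ∃ x' ∈ Set.Ioo x₀ x, f x - taylorWithinEval f n (Set.Icc x₀ x) x₀ x =
          iteratedDerivWithin (n + 1) f (Set.Icc x₀ x) x' * (x - x₀) ^ (n + 1)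
            / (Nat.factorial (n + 1) : ℝ) := by
        have hfx' : ContDiffOn ℝ (n : WithTop ℕ∞) f (Set.uIcc x₀ x) := by
          rw [Set.uIcc_of_le hx₀x.le]; exact_mod_cast hfx
        have h := taylor_mean_remainder_lagrange hx₀x.ne hfx'
          (by rwa [Set.uIcc_of_le hx₀x.le, Set.uIoo_of_le hx₀x.le])
        rwa [Set.uIcc_of_le hx₀x.le, Set.uIoo_of_le hx₀x.le] at h
      -- identify the taylor polynomial with Q x
      have hTay : taylorWithinEval f n (Set.Icc x₀ x) x₀ x = Q x := by
        rw [taylor_within_apply]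
        simp only [hQdef, ← hn]
        refine Finset.sum_congr rfl fun k hk => ?_
        have hkM : k ≤ M := le_of_lt (Finset.mem_range.1 hk)
        rw [aux_iteratedDerivWithin_subIcc hT hf hx₀x hsubx hkM
          (Set.left_mem_Icc.2 hx₀x.le)]
        rw [smul_eq_mul]
      -- identify the M-th derivative at x'
      have hx'Icc : x' ∈ Set.Icc x₀ x := Set.Ioo_subset_Icc_self hx'
      have hDer : iteratedDerivWithin (n + 1) f (Set.Icc x₀ x) x'
          = iteratedDerivWithin M f (Set.Icc 0 T) x' := by
        rw [← hn]
        exact aux_iteratedDerivWithin_subIcc hT hf hx₀x hsubx le_rfl hx'Icc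
      have hxsub : x - x₀ = (j : ℝ) * δ := by rw [hx₀def, hxdef]; ring
      rw [hTay] at heq
      rw [heq, hDer, ← hn, hxsub]
      have hx'mem : x' ∈ Set.Icc x₀ b := ⟨hx'.1.le, le_trans hx'.2.le hxb⟩
      have hDle : |iteratedDerivWithin M f (Set.Icc 0 T) x'| ≤ C :=
        le_csSup hbdd ⟨x', hx'mem, rfl⟩
      rw [abs_div, abs_mul, abs_pow, abs_mul]
      rw [abs_of_nonneg (Nat.cast_nonneg j : (0:ℝ) ≤ (j:ℝ)), abs_of_pos hδ,
        abs_of_pos (by positivity : (0:ℝ) < (Nat.factorial M : ℝ))]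
      rw [mul_pow]
      apply div_le_div_of_nonneg_right ?_ (by positivity)
      exact mul_le_mul_of_nonneg_right hDle (by positivity)
  -- combine
  have hstep : ∑ j ∈ Finset.range L, a j * f (((i : ℝ) + (j : ℝ)) * δ)
      = ∑ j ∈ Finset.range L,
          a j * (f (((i : ℝ) + (j : ℝ)) * δ) - Q (((i : ℝ) + (j : ℝ)) * δ)) := by
    simp only [mul_sub, Finset.sum_sub_distrib, hQ0, sub_zero]
  rw [hstep]
  calc |∑ j ∈ Finset.range L,
          a j * (f (((i : ℝ) + (j : ℝ)) * δ) - Q (((i : ℝ) + (j : ℝ)) * δ))|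
      ≤ ∑ j ∈ Finset.range L,
          |a j * (f (((i : ℝ) + (j : ℝ)) * δ) - Q (((i : ℝ) + (j : ℝ)) * δ))| :=
        Finset.abs_sum_le_sum_abs _ _
    _ ≤ ∑ j ∈ Finset.range L,
          |a j| * (C * ((j : ℝ) ^ M * δ ^ M) / (Nat.factorial M : ℝ)) := by
        refine Finset.sum_le_sum fun j hj => ?_
        rw [abs_mul]
        exact mul_le_mul_of_nonneg_left (key j (Finset.mem_range.1 hj)) (abs_nonneg _)
    _ = (∑ j ∈ Finset.range L, |a j| * (j : ℝ) ^ M / (Nat.factorial M : ℝ)) * δ ^ M * C := by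
        rw [Finset.sum_mul, Finset.sum_mul]
        exact Finset.sum_congr rfl fun j _ => by ring
end
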